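/- (Theorem 2, inequality) Assume E y_j ≠ E y_k for all j ≠ k. Then Acc ≤ (1/(n·(m−1)))·Σ_{1 ≤ j < k ≤ m} (|N_j| + |N_k|)·S*_{j,k}; that is, the multiclass classification accuracy is upper-bounded by the weighted average over all unordered label pairs of the pairwise maximum separabilities. -/

import Mathlib

open Finset

/-- The pairwise separability of the hidden states `h` with respect to label tokens
`a, b` along direction `u`:
`S_{a,b}(u) = (1/(|N_a| + |N_b|)) · (|{i ∈ N_a | ⟪u, h i⟫ ≥ 0}| + |{i ∈ N_b | ⟪u, h i⟫ < 0}|)`. -/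
noncomputable def sepPair {d n : ℕ} {V : Type*} [DecidableEq V]
    (h : Fin n → EuclideanSpace ℝ (Fin d)) (y : Fin n → V) (a b : V)
    (u : EuclideanSpace ℝ (Fin d)) : ℝ :=
  (1 / (((univ.filter fun i => y i = a).card : ℝ) +
        ((univ.filter fun i => y i = b).card : ℝ))) *
    (((univ.filter fun i => y i = a ∧ 0 ≤ (inner ℝ u (h i) : ℝ)).card : ℝ) +
     ((univ.filter fun i => y i = b ∧ (inner ℝ u (h i) : ℝ) < 0).card : ℝ))

/-- The pairwise maximum separability `S*_{a,b} = sup {S_{a,b}(u) | ‖u‖ = 1}`. -/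
noncomputable def sepPairSup {d n : ℕ} {V : Type*} [DecidableEq V]
    (h : Fin n → EuclideanSpace ℝ (Fin d)) (y : Fin n → V) (a b : V) : ℝ :=
  sSup {r : ℝ | ∃ u : EuclideanSpace ℝ (Fin d), ‖u‖ = 1 ∧ sepPair h y a b u = r}

/-- Index `i` with `y i = t k` is correctly classified (ties among the labels
`t 0, …, t (m-1)` broken toward the smaller index): `⟪E (t k), h i⟫ > ⟪E (t j), h i⟫` for
all `j < k`, `⟪E (t k), h i⟫ ≥ ⟪E (t j), h i⟫` for all `j > k`, and
`⟪E (t k), h i⟫ > ⟪E v, h i⟫` for every `v` outside `{t 0, …, t (m-1)}`. -/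
def mcorrect {d n m : ℕ} {V : Type*} (E : V → EuclideanSpace ℝ (Fin d))
    (h : Fin n → EuclideanSpace ℝ (Fin d)) (y : Fin n → V) (t : Fin m → V)
    (i : Fin n) : Prop :=
  ∃ k : Fin m, y i = t k ∧
    (∀ j : Fin m, j < k → (inner ℝ (E (t j)) (h i) : ℝ) < (inner ℝ (E (t k)) (h i) : ℝ)) ∧
    (∀ j : Fin m, k < j → (inner ℝ (E (t j)) (h i) : ℝ) ≤ (inner ℝ (E (t k)) (h i) : ℝ)) ∧
    (∀ v : V, (∀ j : Fin m, v ≠ t j) → (inner ℝ (E v) (h i) : ℝ) < (inner ℝ (E (t k)) (h i) : ℝ))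

noncomputable instance {d n m : ℕ} {V : Type*} [Fintype V] [DecidableEq V]
    (E : V → EuclideanSpace ℝ (Fin d)) (h : Fin n → EuclideanSpace ℝ (Fin d))
    (y : Fin n → V) (t : Fin m → V) : DecidablePred (mcorrect E h y t) := fun i => by
  unfold mcorrect; infer_instance

/-- The multiclass accuracy `Acc = (1/n) · |{i | i is correctly classified}|`. -/
noncomputable def macc {d n m : ℕ} {V : Type*} [Fintype V] [DecidableEq V]
    (E : V → EuclideanSpace ℝ (Fin d)) (h : Fin n → EuclideanSpace ℝ (Fin d))
    (y : Fin n → V) (t : Fin m → V) : ℝ :=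
  (1 / (n : ℝ)) * ((univ.filter fun i => mcorrect E h y t i).card : ℝ)

lemma pair_sum_aux {m : ℕ} (C : Fin m → ℝ) :
    ∑ j : Fin m, ∑ k : Fin m, (if j < k then C j + C k else 0)
      = ((m : ℝ) - 1) * ∑ j, C j := by
  have h1 : ∑ j : Fin m, ∑ k : Fin m, (if j < k then C j + C k else 0)
      = ∑ j : Fin m, ∑ k : Fin m,
          ((if j < k then C j else 0) + (if j < k then C k else 0)) := by
    refine Finset.sum_congr rfl fun j _ => Finset.sum_congr rfl fun k _ => ?_
    split_ifs <;> simp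
  rw [h1]
  simp only [Finset.sum_add_distrib]
  rw [Finset.sum_comm (f := fun j k : Fin m => if j < k then C k else 0)]
  rw [← Finset.sum_add_distrib]
  simp only [← Finset.sum_add_distrib]
  have h2 : ∀ j : Fin m, ∑ k : Fin m,
      ((if j < k then C j else 0) + (if k < j then C j else 0))
      = ((m : ℝ) - 1) * C j := by
    intro j
    have hterm : ∀ k : Fin m, (if j < k then C j else 0) + (if k < j then C j else 0)
        = C j - (if j = k then C j else 0) := by
      intro k
      rcases lt_trichotomy j k with hlt | heq | hgt
      · simp [hlt, not_lt_of_gt hlt, ne_of_lt hlt]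
      · simp [heq]
      · simp [hgt, not_lt_of_gt hgt, (ne_of_lt hgt).symm]
    simp only [hterm]
    rw [Finset.sum_sub_distrib, Finset.sum_const, Finset.sum_ite_eq]
    simp only [Finset.card_univ, Fintype.card_fin, Finset.mem_univ, if_true,
      nsmul_eq_mul]
    ring
  rw [Finset.sum_congr rfl fun j _ => h2 j, ← Finset.mul_sum]

/-- (Theorem 2, inequality) With pairwise distinct label tokens `t 0, …, t (m-1)` having
pairwise distinct unembedding vectors, nonempty classes `N_j = {i | y i = t j}` covering
all of `Fin n`, the multiclass accuracy is upper-bounded by the weighted average over all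
unordered label pairs of the pairwise maximum separabilities:
`Acc ≤ (1/(n·(m−1))) · Σ_{j < k} (|N_j| + |N_k|) · S*_{j,k}`. -/
theorem stmt_8 {d n m : ℕ} (hd : 1 ≤ d) (hn : 1 ≤ n) (hm : 2 ≤ m)
    {V : Type*} [Fintype V] [DecidableEq V]
    (E : V → EuclideanSpace ℝ (Fin d))
    (h : Fin n → EuclideanSpace ℝ (Fin d)) (y : Fin n → V)
    (t : Fin m → V) (ht : Function.Injective t)
    (hy : ∀ i : Fin n, ∃ j : Fin m, y i = t j)
    (hne : ∀ j : Fin m, ∃ i : Fin n, y i = t j)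
    (hE : ∀ j k : Fin m, j ≠ k → E (t j) ≠ E (t k)) :
    macc E h y t ≤
      (1 / ((n : ℝ) * ((m : ℝ) - 1))) *
        ∑ j : Fin m, ∑ k : Fin m,
          if j < k then
            (((univ.filter fun i => y i = t j).card : ℝ) +
             ((univ.filter fun i => y i = t k).card : ℝ)) *
              sepPairSup h y (t j) (t k)
          else 0 := by
  classical
  have hn0 : (0 : ℝ) < (n : ℝ) := by exact_mod_cast hn
  have hm1 : (0 : ℝ) < (m : ℝ) - 1 := by
    have : (2 : ℝ) ≤ (m : ℝ) := by exact_mod_cast hm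
    linarith
  have hNpos : ∀ j : Fin m,
      (0 : ℝ) < ((univ.filter fun i => y i = t j).card : ℝ) := by
    intro j
    obtain ⟨i, hi⟩ := hne j
    have hmem : i ∈ univ.filter fun i => y i = t j := by simp [hi]
    exact_mod_cast Finset.card_pos.2 ⟨i, hmem⟩
  -- key pairwise inequality
  have key : ∀ j k : Fin m, j < k →
      ((univ.filter fun i => mcorrect E h y t i ∧ y i = t j).card : ℝ) +
        ((univ.filter fun i => mcorrect E h y t i ∧ y i = t k).card : ℝ) ≤
      (((univ.filter fun i => y i = t j).card : ℝ) +
        ((univ.filter fun i => y i = t k).card : ℝ)) *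
          sepPairSup h y (t j) (t k) := by
    intro j k hjk
    have hjk' : j ≠ k := ne_of_lt hjk
    set w : EuclideanSpace ℝ (Fin d) := E (t j) - E (t k) with hw
    have hw0 : w ≠ 0 := sub_ne_zero.2 (hE j k hjk')
    have hwn : (0 : ℝ) < ‖w‖ := norm_pos_iff.2 hw0
    set u : EuclideanSpace ℝ (Fin d) := ‖w‖⁻¹ • w with hu
    have hu1 : ‖u‖ = 1 := by
      rw [hu, norm_smul, norm_inv, norm_norm, inv_mul_cancel₀ (ne_of_gt hwn)]
    have hinner : ∀ i, (inner ℝ u (h i) : ℝ)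
        = ‖w‖⁻¹ * ((inner ℝ (E (t j)) (h i) : ℝ) - (inner ℝ (E (t k)) (h i) : ℝ)) := by
      intro i
      rw [hu, real_inner_smul_left, hw, inner_sub_left]
    have hsub1 : (univ.filter fun i => mcorrect E h y t i ∧ y i = t j) ⊆
        univ.filter fun i => y i = t j ∧ 0 ≤ (inner ℝ u (h i) : ℝ) := by
      intro i hi
      simp only [Finset.mem_filter, Finset.mem_univ, true_and] at hi ⊢
      obtain ⟨⟨c, hc, h1, h2, h3⟩, hyi⟩ := hi
      have hcj : c = j := ht (by rw [← hc, hyi])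
      subst hcj
      refine ⟨hyi, ?_⟩
      rw [hinner]
      exact mul_nonneg (inv_nonneg.2 (le_of_lt hwn)) (sub_nonneg.2 (h2 k hjk))
    have hsub2 : (univ.filter fun i => mcorrect E h y t i ∧ y i = t k) ⊆
        univ.filter fun i => y i = t k ∧ (inner ℝ u (h i) : ℝ) < 0 := by
      intro i hi
      simp only [Finset.mem_filter, Finset.mem_univ, true_and] at hi ⊢
      obtain ⟨⟨c, hc, h1, h2, h3⟩, hyi⟩ := hi
      have hck : c = k := ht (by rw [← hc, hyi])
      subst hck
      refine ⟨hyi, ?_⟩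
      rw [hinner]
      exact mul_neg_of_pos_of_neg (inv_pos.2 hwn) (sub_neg.2 (h1 j hjk))
    have hNN : (0 : ℝ) < ((univ.filter fun i => y i = t j).card : ℝ) +
        ((univ.filter fun i => y i = t k).card : ℝ) := add_pos (hNpos j) (hNpos k)
    have hstep : ((univ.filter fun i => mcorrect E h y t i ∧ y i = t j).card : ℝ) +
        ((univ.filter fun i => mcorrect E h y t i ∧ y i = t k).card : ℝ) ≤
        (((univ.filter fun i => y i = t j).card : ℝ) +
          ((univ.filter fun i => y i = t k).card : ℝ)) *
            sepPair h y (t j) (t k) u := by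
      have hca : ((univ.filter fun i => mcorrect E h y t i ∧ y i = t j).card : ℝ) ≤
          ((univ.filter fun i => y i = t j ∧ 0 ≤ (inner ℝ u (h i) : ℝ)).card : ℝ) := by
        exact_mod_cast Finset.card_le_card hsub1
      have hcb : ((univ.filter fun i => mcorrect E h y t i ∧ y i = t k).card : ℝ) ≤
          ((univ.filter fun i => y i = t k ∧ (inner ℝ u (h i) : ℝ) < 0).card : ℝ) := by
        exact_mod_cast Finset.card_le_card hsub2
      unfold sepPair
      rw [← mul_assoc, mul_one_div, div_self (ne_of_gt hNN), one_mul]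
      exact add_le_add hca hcb
    -- bounded above
    have hbdd : BddAbove {r : ℝ | ∃ u' : EuclideanSpace ℝ (Fin d),
        ‖u'‖ = 1 ∧ sepPair h y (t j) (t k) u' = r} := by
      refine ⟨1, ?_⟩
      rintro r ⟨u', hu', rfl⟩
      unfold sepPair
      rw [one_div, inv_mul_le_iff₀ hNN, mul_one]
      have h1 : ((univ.filter fun i => y i = t j ∧ 0 ≤ (inner ℝ u' (h i) : ℝ)).card : ℝ) ≤
          ((univ.filter fun i => y i = t j).card : ℝ) := by
        refine Nat.cast_le.2 (Finset.card_le_card ?_)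
        intro i hi
        simp only [Finset.mem_filter, Finset.mem_univ, true_and] at hi ⊢
        exact hi.1
      have h2 : ((univ.filter fun i => y i = t k ∧ (inner ℝ u' (h i) : ℝ) < 0).card : ℝ) ≤
          ((univ.filter fun i => y i = t k).card : ℝ) := by
        refine Nat.cast_le.2 (Finset.card_le_card ?_)
        intro i hi
        simp only [Finset.mem_filter, Finset.mem_univ, true_and] at hi ⊢
        exact hi.1
      linarith
    have hle : sepPair h y (t j) (t k) u ≤ sepPairSup h y (t j) (t k) :=
      le_csSup hbdd ⟨u, hu1, rfl⟩
    calc ((univ.filter fun i => mcorrect E h y t i ∧ y i = t j).card : ℝ) +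
        ((univ.filter fun i => mcorrect E h y t i ∧ y i = t k).card : ℝ)
        ≤ _ * sepPair h y (t j) (t k) u := hstep
      _ ≤ _ * sepPairSup h y (t j) (t k) :=
          mul_le_mul_of_nonneg_left hle (le_of_lt hNN)
  -- total correct count is sum over classes
  have hcorrect : ((univ.filter fun i => mcorrect E h y t i).card : ℝ)
      = ∑ j : Fin m,
          ((univ.filter fun i => mcorrect E h y t i ∧ y i = t j).card : ℝ) := by
    rw [← Nat.cast_sum]
    congr 1
    simp only [Finset.card_filter]
    rw [Finset.sum_comm]
    refine Finset.sum_congr rfl fun i _ => ?_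
    by_cases hP : mcorrect E h y t i
    · obtain ⟨j₀, hj₀⟩ := hy i
      have heq : ∀ j : Fin m, (y i = t j) = (j₀ = j) := by
        intro j
        refine propext ⟨fun hh => ht (by rw [← hj₀, hh]), fun hh => hh ▸ hj₀⟩
      simp only [hP, true_and, heq, Finset.sum_ite_eq, Finset.mem_univ, if_true]
    · simp [hP]
  -- assemble
  have hsum :
      ∑ j : Fin m, ∑ k : Fin m,
        (if j < k then
          ((univ.filter fun i => mcorrect E h y t i ∧ y i = t j).card : ℝ) +
          ((univ.filter fun i => mcorrect E h y t i ∧ y i = t k).card : ℝ)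
        else 0) ≤
      ∑ j : Fin m, ∑ k : Fin m,
        (if j < k then
          (((univ.filter fun i => y i = t j).card : ℝ) +
           ((univ.filter fun i => y i = t k).card : ℝ)) *
            sepPairSup h y (t j) (t k)
        else 0) := by
    refine Finset.sum_le_sum fun j _ => Finset.sum_le_sum fun k _ => ?_
    split_ifs with hjk
    · exact key j k hjk
    · exact le_refl 0
  have hps := pair_sum_aux
    (fun j => ((univ.filter fun i => mcorrect E h y t i ∧ y i = t j).card : ℝ))
  rw [macc, hcorrect]
  have hfinal : (1 / (n : ℝ)) *
      ∑ j : Fin m, ((univ.filter fun i => mcorrect E h y t i ∧ y i = t j).card : ℝ)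
      = (1 / ((n : ℝ) * ((m : ℝ) - 1))) *
        (((m : ℝ) - 1) *
          ∑ j : Fin m,
            ((univ.filter fun i => mcorrect E h y t i ∧ y i = t j).card : ℝ)) := by
    rw [← mul_assoc, one_div, one_div, mul_inv, inv_mul_cancel_right₀ hm1.ne']
  rw [hfinal]
  refine mul_le_mul_of_nonneg_left ?_ (by positivity)
  rw [← hps]
  exact hsum
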